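/- Let G be a finite group with subgroup H and subset K ⊆ G. Then K is a transversal to every conjugate of H in G if and only if |K| = |G : H| and for every g ∈ G, H^g ∩ KK⁻¹ = {1}. -/
import Mathlib


/-- `K` is a transversal to the subgroup `U` of `G`: every element of `G` lies in
`U * k` (i.e. in the right coset `U k`) for a unique `k ∈ K`. -/
def IsTransversal {G : Type*} [Group G] (U : Subgroup G) (K : Set G) : Prop :=
  ∀ g : G, ∃! k, k ∈ K ∧ ∃ h ∈ U, g = h * k

lemma isTransversal_iff_bijective {G : Type*} [Group G] (U : Subgroup G) (K : Set G) :
    IsTransversal U K ↔ Function.Bijective (fun p : U × K => (p.1 : G) * p.2) := by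
  constructor
  · intro h
    constructor
    · rintro ⟨u₁, k₁⟩ ⟨u₂, k₂⟩ heq
      simp only at heq
      obtain ⟨k, -, huniq⟩ := h ((u₁ : G) * k₁)
      have h1 : (k₁ : G) = k := huniq k₁ ⟨k₁.2, u₁, u₁.2, rfl⟩
      have h2 : (k₂ : G) = k := huniq k₂ ⟨k₂.2, u₂, u₂.2, heq⟩
      have hk : (k₁ : G) = k₂ := h1.trans h2.symm
      have hu : (u₁ : G) = u₂ := by rw [hk] at heq; exact mul_right_cancel heq
      exact Prod.ext (Subtype.ext hu) (Subtype.ext hk)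
    · intro g
      obtain ⟨k, ⟨hkK, h, hU, hg⟩, -⟩ := h g
      exact ⟨(⟨h, hU⟩, ⟨k, hkK⟩), hg.symm⟩
  · intro ⟨hinj, hsurj⟩ g
    obtain ⟨⟨u, k⟩, hg⟩ := hsurj g
    refine ⟨k, ⟨k.2, u, u.2, hg.symm⟩, ?_⟩
    rintro k' ⟨hk', h', hh', rfl⟩
    have := hinj (a₁ := (⟨⟨h', hh'⟩, ⟨k', hk'⟩⟩ : U × K)) (a₂ := (u, k)) (by simpa using hg.symm)
    exact congrArg (fun p : U × K => (p.2 : G)) this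

/-- For a finite group `G`, a subgroup `H` and a subset `K`:
`K` is a transversal to every conjugate `H^g = g⁻¹ H g` of `H` if and only if
`|K| = |G : H|` and `H^g ∩ K K⁻¹ = {1}` for all `g ∈ G`. -/
theorem transversal_iff_card_and_trivial_intersection
    {G : Type*} [Group G] [Fintype G] (H : Subgroup G) (K : Set G) :
    (∀ g : G, IsTransversal (H.map (MulAut.conj g⁻¹).toMonoidHom) K) ↔
      (K.ncard = H.index ∧
        ∀ g : G,
          {x : G | ∃ h ∈ H, x = g⁻¹ * h * g} ∩
            {x : G | ∃ k₁ ∈ K, ∃ k₂ ∈ K, x = k₁ * k₂⁻¹} = {1}) := by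
  have memU : ∀ (g x : G), x ∈ H.map (MulAut.conj g⁻¹).toMonoidHom ↔ ∃ h ∈ H, x = g⁻¹ * h * g := by
    intro g x
    simp only [Subgroup.mem_map, MulEquiv.coe_toMonoidHom, MulAut.conj_apply, inv_inv]
    constructor
    · rintro ⟨h, hh, rfl⟩; exact ⟨h, hh, rfl⟩
    · rintro ⟨h, hh, rfl⟩; exact ⟨h, hh, rfl⟩
  have cardU : ∀ g : G, Nat.card (H.map (MulAut.conj g⁻¹).toMonoidHom) = Nat.card H := by
    intro g
    exact Nat.card_congr
      (H.equivMapOfInjective _ (MulAut.conj g⁻¹).injective).toEquiv.symm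
  have cardUK : ∀ g : G, Nat.card ((H.map (MulAut.conj g⁻¹).toMonoidHom) × K)
      = Nat.card H * K.ncard := by
    intro g
    rw [Nat.card_prod, cardU, Nat.card_coe_set_eq]
  have hHpos : 0 < Nat.card H := Nat.card_pos
  constructor
  · intro hT
    have hbij := fun g => (isTransversal_iff_bijective _ K).mp (hT g)
    have hKne : K.Nonempty := by
      obtain ⟨⟨u, k⟩, -⟩ := (hbij 1).2 1
      exact ⟨k, k.2⟩
    constructor
    · have hc : Nat.card H * K.ncard = Nat.card G := by
        rw [← cardUK 1]; exact Nat.card_eq_of_bijective _ (hbij 1)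
      have hc2 : Nat.card H * H.index = Nat.card G := Subgroup.card_mul_index H
      exact Nat.eq_of_mul_eq_mul_left hHpos (hc.trans hc2.symm)
    · intro g
      ext x
      simp only [Set.mem_inter_iff, Set.mem_setOf_eq, Set.mem_singleton_iff]
      constructor
      · rintro ⟨⟨h, hh, rfl⟩, k₁, hk₁, k₂, hk₂, hx⟩
        set U := H.map (MulAut.conj g⁻¹).toMonoidHom
        have hxU : g⁻¹ * h * g ∈ U := (memU g _).mpr ⟨h, hh, rfl⟩
        have heq : ((⟨⟨g⁻¹ * h * g, hxU⟩, ⟨k₂, hk₂⟩⟩ : U × K))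
            = (⟨1, ⟨k₁, hk₁⟩⟩ : U × K) := by
          apply (hbij g).1
          simp only [OneMemClass.coe_one, one_mul]
          rw [hx]
          group
        have : (⟨g⁻¹ * h * g, hxU⟩ : U) = 1 := congrArg Prod.fst heq
        simpa using congrArg (Subtype.val) this
      · rintro rfl
        obtain ⟨k, hk⟩ := hKne
        exact ⟨⟨1, H.one_mem, by group⟩, k, hk, k, hk, by group⟩
  · rintro ⟨hcard, hint⟩ g
    rw [isTransversal_iff_bijective]
    set U := H.map (MulAut.conj g⁻¹).toMonoidHom with hUdef
    have hinj : Function.Injective (fun p : U × K => (p.1 : G) * p.2) := by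
      rintro ⟨u₁, k₁⟩ ⟨u₂, k₂⟩ heq
      simp only at heq
      have hmem : ((u₂ : G)⁻¹ * u₁) ∈
          ({x : G | ∃ h ∈ H, x = g⁻¹ * h * g} ∩
            {x : G | ∃ k₁ ∈ K, ∃ k₂ ∈ K, x = k₁ * k₂⁻¹}) := by
        constructor
        · exact (memU g _).mp (U.mul_mem (U.inv_mem u₂.2) u₁.2)
        · refine ⟨k₂, k₂.2, k₁, k₁.2, ?_⟩
          have h2 : (u₂ : G)⁻¹ * ((u₁ : G) * k₁) * (k₁ : G)⁻¹
              = (u₂ : G)⁻¹ * ((u₂ : G) * k₂) * (k₁ : G)⁻¹ := by rw [heq]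
          simpa [mul_assoc] using h2
      rw [hint g] at hmem
      have h1 : (u₂ : G)⁻¹ * u₁ = 1 := hmem
      have hu : (u₁ : G) = u₂ := by
        rw [← one_mul (u₁ : G), ← mul_inv_cancel (u₂ : G), mul_assoc, h1, mul_one]
      have hk : (k₁ : G) = k₂ := by
        rw [hu] at heq; exact mul_left_cancel heq
      exact Prod.ext (Subtype.ext hu) (Subtype.ext hk)
    rw [Nat.bijective_iff_injective_and_card]
    refine ⟨hinj, ?_⟩
    rw [hUdef, cardUK g, hcard]
    exact Subgroup.card_mul_index H
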